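/- Let μ = (μ₁,…,μ_m) be a partition written as μ = (r^{a_r}, (r−1)^{a_{r−1}}, …, 1^{a_1}, 0^{a_0}) where r = μ₁, a_s = μ'_s − μ'_{s+1} for s ≥ 1 (with μ'_{r+1} = 0), a_0 = m − μ'₁, and μ' is the conjugate partition. Let λ be a covariant weight with 0 ≤ λ_i − μ_i ≤ n, and define ν₁^{(s)} = mid{μ'_{s−1}, μ'_s, λ'_s} (the middle of the three integers, with μ'₀ sufficiently large). Then the rational function identity holds: (u+λ_{m+1}+m)/(u+m) · ∏_{i : λ_i−μ_i ≥ 1} (u−μ_i+i)/(u−μ_i+i−1) = ∏_{s=1}^{r+1}(u+ν₁^{(s)}−s+1) / (∏_{s=1}^{r}(u+μ'_s−s+1) · (u−r)). -/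

import Mathlib

open Finset

/-- A downward-closed finite set of naturals is an initial segment. -/
lemma natDC (S : Finset ℕ) (h : ∀ j k : ℕ, j ≤ k → k ∈ S → j ∈ S) :
    S = Finset.range S.card := by
  have key : ∀ i, i ∈ S ↔ i < S.card := by
    intro i
    constructor
    · intro hi
      have hsub : Finset.range (i + 1) ⊆ S := by
        intro j hj
        exact h j i (Nat.lt_succ_iff.mp (Finset.mem_range.mp hj)) hi
      have := Finset.card_le_card hsub
      simpa using this
    · intro hi
      by_contra hiS
      have hsub : S ⊆ Finset.range i := by
        intro k hk
        rw [Finset.mem_range]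
        by_contra hk'
        exact hiS (h i k (Nat.le_of_not_lt hk') hk)
      have := Finset.card_le_card hsub
      simp at this
      omega
  ext i
  rw [Finset.mem_range, key]

/-- Threshold characterization for an antitone function on `Fin m`. -/
lemma finChar {m : ℕ} (f : Fin m → ℕ) (hf : ∀ i j : Fin m, i ≤ j → f j ≤ f i)
    (s : ℕ) (i : Fin m) :
    s ≤ f i ↔ (i : ℕ) < (Finset.univ.filter fun j => s ≤ f j).card := by
  classical
  set A : Finset (Fin m) := Finset.univ.filter fun j => s ≤ f j with hA
  have hdc : ∀ j k : ℕ, j ≤ k → k ∈ A.image Fin.val → j ∈ A.image Fin.val := by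
    intro j k hjk hk
    rw [Finset.mem_image] at hk ⊢
    obtain ⟨k', hk', hkv⟩ := hk
    have hjm : j < m := lt_of_le_of_lt hjk (hkv ▸ k'.isLt)
    refine ⟨⟨j, hjm⟩, ?_, rfl⟩
    rw [hA, Finset.mem_filter] at hk' ⊢
    refine ⟨Finset.mem_univ _, le_trans hk'.2 ?_⟩
    exact hf ⟨j, hjm⟩ k' (by simp [Fin.le_def]; omega)
  have hcard : (A.image Fin.val).card = A.card :=
    Finset.card_image_of_injective _ Fin.val_injective
  have hseg := natDC (A.image Fin.val) hdc
  have : (i : ℕ) ∈ A.image Fin.val ↔ (i : ℕ) < A.card := by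
    rw [hseg, Finset.mem_range, hcard]
  rw [← this, Finset.mem_image]
  constructor
  · intro hi
    exact ⟨i, by rw [hA, Finset.mem_filter]; exact ⟨Finset.mem_univ _, hi⟩, rfl⟩
  · rintro ⟨j, hj, hji⟩
    rw [hA, Finset.mem_filter] at hj
    have : j = i := Fin.val_injective hji
    exact this ▸ hj.2

/-- Telescoping product of ratios. -/
lemma prodRatio {K : Type*} [Field K] (g : ℕ → K) (hg : ∀ i, g i ≠ 0)
    (a b : ℕ) (hab : a ≤ b) :
    ∏ i ∈ Finset.Ico a b, (g (i + 1) / g i) = g b / g a := by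
  induction b, hab using Nat.le_induction with
  | base => simp [div_self (hg a)]
  | succ b hab ih =>
      rw [Finset.prod_Ico_succ_top hab, ih]
      have : g b / g a * (g (b + 1) / g b) = g (b + 1) / g a * (g b / g b) := by ring
      rw [this, div_self (hg b), mul_one]

/-- The linear factor `X + z`. -/
noncomputable def eF (z : ℤ) : RatFunc ℚ := RatFunc.X + (z : RatFunc ℚ)

lemma eF_ne (z : ℤ) : eF z ≠ 0 := by
  have h1 : eF z
      = algebraMap (Polynomial ℚ) (RatFunc ℚ) (Polynomial.X + (z : Polynomial ℚ)) := by
    rw [eF, map_add, RatFunc.algebraMap_X, map_intCast]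
  rw [h1]
  apply RatFunc.algebraMap_ne_zero
  have h2 : ((z : ℤ) : Polynomial ℚ) = Polynomial.C ((z : ℤ) : ℚ) := by
    simp
  rw [h2]
  exact Polynomial.X_add_C_ne_zero ((z : ℤ) : ℚ)

/-- Row lengths of the Young diagram `Γ_λ` attached to the covariant highest
weight `λ = (lam | nu)`. -/
def GammaRows (m n : ℕ) (lam : Fin m → ℕ) (nu : Fin n → ℕ) : ℕ → ℕ :=
  fun i => if h : i < m then lam ⟨i, h⟩
    else (Finset.univ.filter fun p : Fin n => i - m + 1 ≤ nu p).card

/-- with `μ' ` the conjugate of the partition `μ`, `λ'_s` the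
column heights of `Γ_λ`, `r = μ₁`, and
`ν₁^{(s)} = mid{μ'_{s-1}, μ'_s, λ'_s} = max (μ'_s) (min (μ'_{s-1}) (λ'_s))`
(`μ'₀` sufficiently large, e.g. `μ'₀ = λ'₁`), the identity of rational functions
in `u` holds:
`(u + λ_{m+1} + m)/(u + m) · ∏_{λ_i - μ_i ≥ 1} (u - μ_i + i)/(u - μ_i + i - 1)
 = ∏_{s=1}^{r+1} (u + ν₁^{(s)} - s + 1)
   / (∏_{s=1}^{r} (u + μ'_s - s + 1) · (u - r))`. -/
theorem stmt_14 (m n : ℕ) (hm : 0 < m) (hn : 0 < n)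
    (lam : Fin m → ℕ) (nu : Fin n → ℕ)
    (hlam : ∀ i j : Fin m, i ≤ j → lam j ≤ lam i)
    (hnu : ∀ p q : Fin n, p ≤ q → nu q ≤ nu p)
    (hell : (Finset.univ.filter fun p : Fin n => nu p ≠ 0).card
      ≤ lam ⟨m - 1, Nat.sub_lt hm one_pos⟩)
    (mu : Fin m → ℕ) (hmu : ∀ i j : Fin m, i ≤ j → mu j ≤ mu i)
    (hmulam : ∀ i : Fin m, mu i ≤ lam i ∧ lam i ≤ mu i + n)
    (r : ℕ) (hr : r = mu ⟨0, hm⟩)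
    (lamcol : ℕ → ℕ)
    (hlamcol : ∀ j, lamcol j = Nat.card {i : ℕ // j - 1 < GammaRows m n lam nu i})
    (mucol : ℕ → ℕ)
    (hmucol : ∀ j, mucol j = if j = 0 then lamcol 1
      else (Finset.univ.filter fun i : Fin m => j ≤ mu i).card)
    (nu1 : ℕ → ℕ)
    (hnu1 : ∀ s, nu1 s = max (mucol s) (min (mucol (s - 1)) (lamcol s))) :
    ((RatFunc.X : RatFunc ℚ) + (nu ⟨0, hn⟩ : RatFunc ℚ) + (m : RatFunc ℚ))
        / ((RatFunc.X : RatFunc ℚ) + (m : RatFunc ℚ))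
        * ∏ i ∈ Finset.univ.filter (fun i : Fin m => mu i + 1 ≤ lam i),
            ((RatFunc.X : RatFunc ℚ) - (mu i : RatFunc ℚ) + ((i : ℕ) + 1 : RatFunc ℚ))
            / ((RatFunc.X : RatFunc ℚ) - (mu i : RatFunc ℚ) + ((i : ℕ) : RatFunc ℚ))
    = (∏ s ∈ Finset.Icc 1 (r + 1),
          ((RatFunc.X : RatFunc ℚ) + (((nu1 s : ℤ) - s + 1 : ℤ) : RatFunc ℚ)))
        / ((∏ s ∈ Finset.Icc 1 r,
              ((RatFunc.X : RatFunc ℚ) + (((mucol s : ℤ) - s + 1 : ℤ) : RatFunc ℚ)))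
            * ((RatFunc.X : RatFunc ℚ) - (r : RatFunc ℚ))) := by
  classical
  -- basic abbreviations
  set ν0 : ℕ := nu ⟨0, hn⟩ with hν0
  set P : ℕ → ℕ := fun s => if s = 0 then m
      else (Finset.univ.filter fun i : Fin m => s ≤ mu i).card with hP
  set T : ℕ → ℕ := fun c => (Finset.univ.filter fun i : Fin m => c + 1 ≤ lam i).card with hT
  set nuP : ℕ → ℕ := fun k => (Finset.univ.filter fun p : Fin n => k ≤ nu p).card with hnuP
  set w : ℕ → ℕ := fun c =>
      ((Finset.range ν0).filter fun k => c + 1 ≤ nuP (k + 1)).card with hw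
  -- characterization lemmas
  have hPchar : ∀ (s : ℕ) (i : Fin m), s ≤ mu i ↔ (i : ℕ) < P s := by
    intro s i
    rcases Nat.eq_zero_or_pos s with hs | hs
    · subst hs; simp [hP, i.isLt]
    · have h := finChar mu hmu s i
      rw [hP]
      simp only [if_neg (Nat.pos_iff_ne_zero.mp hs)]
      exact h
  have hTchar : ∀ (c : ℕ) (i : Fin m), c + 1 ≤ lam i ↔ (i : ℕ) < T c := by
    intro c i
    exact finChar lam hlam (c + 1) i
  have hTm : ∀ c, T c ≤ m := by
    intro c
    rw [hT]
    calc (Finset.univ.filter fun i : Fin m => c + 1 ≤ lam i).card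
        ≤ (Finset.univ : Finset (Fin m)).card := Finset.card_filter_le _ _
      _ = m := by simp
  have hPm : ∀ s, P s ≤ m := by
    intro s
    rw [hP]
    rcases Nat.eq_zero_or_pos s with hs | hs
    · simp [hs]
    · simp only [if_neg (Nat.pos_iff_ne_zero.mp hs)]
      calc (Finset.univ.filter fun i : Fin m => s ≤ mu i).card
          ≤ (Finset.univ : Finset (Fin m)).card := Finset.card_filter_le _ _
        _ = m := by simp
  have hPT : ∀ c, P (c + 1) ≤ T c := by
    intro c
    simp only [hP, hT, Nat.add_one_ne_zero, if_false]
    apply Finset.card_le_card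
    intro i hi
    simp only [Finset.mem_filter, Finset.mem_univ, true_and] at hi ⊢
    exact le_trans hi (hmulam i).1
  have hPmono : ∀ c, P (c + 1) ≤ P c := by
    intro c
    rcases Nat.eq_zero_or_pos c with hc | hc
    · subst hc; exact le_trans (hPT 0) (hTm 0)
    · simp only [hP, Nat.add_one_ne_zero, if_false, if_neg (Nat.pos_iff_ne_zero.mp hc)]
      apply Finset.card_le_card
      intro i hi
      simp only [Finset.mem_filter, Finset.mem_univ, true_and] at hi ⊢
      omega
  have hPr : P (r + 1) = 0 := by
    simp only [hP, Nat.add_one_ne_zero, if_false]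
    rw [Finset.card_eq_zero, Finset.filter_eq_empty_iff]
    intro i _
    have := hmu ⟨0, hm⟩ i (by simp [Fin.le_def])
    omega
  -- characterization of w
  have hnuPanti : ∀ j k : ℕ, j ≤ k → nuP k ≤ nuP j := by
    intro j k hjk
    rw [hnuP]
    apply Finset.card_le_card
    intro p hp
    simp only [Finset.mem_filter, Finset.mem_univ, true_and] at hp ⊢
    omega
  have hwchar : ∀ c k, c + 1 ≤ nuP (k + 1) ↔ k < w c := by
    intro c
    have hbound : ∀ k, c + 1 ≤ nuP (k + 1) → k < ν0 := by
      intro k hk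
      simp only [hnuP] at hk
      have hne : (Finset.univ.filter fun p : Fin n => k + 1 ≤ nu p).Nonempty := by
        rw [← Finset.card_pos]
        omega
      obtain ⟨p, hp⟩ := hne
      simp only [Finset.mem_filter, Finset.mem_univ, true_and] at hp
      have hple := hnu ⟨0, hn⟩ p (by simp [Fin.le_def])
      rw [← hν0] at hple
      omega
    have hdc : ∀ j k : ℕ, j ≤ k →
        k ∈ (Finset.range ν0).filter (fun k => c + 1 ≤ nuP (k + 1)) →
        j ∈ (Finset.range ν0).filter (fun k => c + 1 ≤ nuP (k + 1)) := by
      intro j k hjk hk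
      simp only [Finset.mem_filter, Finset.mem_range] at hk ⊢
      exact ⟨lt_of_le_of_lt hjk hk.1, le_trans hk.2 (hnuPanti (j + 1) (k + 1) (by omega))⟩
    have hseg := natDC _ hdc
    intro k
    constructor
    · intro hk
      have hk' : k ∈ (Finset.range ν0).filter (fun k => c + 1 ≤ nuP (k + 1)) := by
        simp only [Finset.mem_filter, Finset.mem_range]
        exact ⟨hbound k hk, hk⟩
      rw [hseg, Finset.mem_range] at hk'
      rw [hw]
      exact hk'
    · intro hk
      have hk' : k ∈ (Finset.range ν0).filter (fun k => c + 1 ≤ nuP (k + 1)) := by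
        rw [hseg, Finset.mem_range]
        rw [hw] at hk
        exact hk
      simp only [Finset.mem_filter] at hk'
      exact hk'.2
  have hnuP1 : nuP 1 ≤ lam ⟨m - 1, Nat.sub_lt hm one_pos⟩ := by
    have heq : (Finset.univ.filter fun p : Fin n => 1 ≤ nu p)
        = (Finset.univ.filter fun p : Fin n => nu p ≠ 0) := by
      apply Finset.filter_congr
      intro p _
      simp [Nat.one_le_iff_ne_zero]
    rw [hnuP]
    simp only
    rw [heq]
    exact hell
  have hw0 : ∀ c, T c < m → w c = 0 := by
    intro c hTc
    by_contra h0
    have h1 : 0 < w c := Nat.pos_of_ne_zero h0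
    have h2 : c + 1 ≤ nuP 1 := by
      have := (hwchar c 0).mpr h1
      simpa using this
    have h3 : ¬ ((⟨m - 1, Nat.sub_lt hm one_pos⟩ : Fin m) : ℕ) < T c := by
      simp only [Fin.val_mk]
      omega
    have h4 : ¬ (c + 1 ≤ lam ⟨m - 1, Nat.sub_lt hm one_pos⟩) := fun h => h3 ((hTchar c _).mp h)
    omega
  have hwnu0 : w 0 = ν0 := by
    rw [hw]
    simp only
    rw [Finset.filter_true_of_mem, Finset.card_range]
    intro k hk
    rw [Finset.mem_range] at hk
    have hmem : (⟨0, hn⟩ : Fin n) ∈ Finset.univ.filter fun p : Fin n => k + 1 ≤ nu p := by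
      simp only [Finset.mem_filter, Finset.mem_univ, true_and]
      omega
    rw [hnuP]
    simp only
    exact Finset.card_pos.mpr ⟨_, hmem⟩
  -- column lengths of Γ
  have hlamT : ∀ c, lamcol (c + 1) = T c + w c := by
    intro c
    have hGset : {i : ℕ | c < GammaRows m n lam nu i}
        = ↑(Finset.range (T c) ∪ Finset.Ico m (m + w c)) := by
      ext i
      simp only [Set.mem_setOf_eq, Finset.coe_union, Set.mem_union, Finset.mem_coe,
        Finset.mem_range, Finset.mem_Ico]
      by_cases him : i < m
      · rw [GammaRows, dif_pos him]
        have h1 := hTchar c ⟨i, him⟩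
        simp only [Fin.val_mk] at h1
        constructor
        · intro h
          exact Or.inl (h1.mp h)
        · rintro (h | h)
          · exact h1.mpr h
          · omega
      · push_neg at him
        rw [GammaRows, dif_neg (not_lt.mpr him)]
        have h2 := hwchar c (i - m)
        simp only [hnuP] at h2
        have hTle := hTm c
        constructor
        · intro h
          right
          have := h2.mp (by omega)
          omega
        · rintro (h | h)
          · omega
          · have : c + 1 ≤ (Finset.univ.filter fun p : Fin n => i - m + 1 ≤ nu p).card :=
              h2.mpr (by omega)
            omega
    have hcard : Nat.card {i : ℕ // c < GammaRows m n lam nu i}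
        = (Finset.range (T c) ∪ Finset.Ico m (m + w c)).card := by
      calc Nat.card {i : ℕ // c < GammaRows m n lam nu i}
          = ({i : ℕ | c < GammaRows m n lam nu i} : Set ℕ).ncard :=
            Nat.card_coe_set_eq _
        _ = ((Finset.range (T c) ∪ Finset.Ico m (m + w c) : Finset ℕ) : Set ℕ).ncard := by
            rw [hGset]
        _ = (Finset.range (T c) ∪ Finset.Ico m (m + w c)).card :=
            Set.ncard_coe_finset _
    rw [hlamcol, Nat.add_sub_cancel, hcard]
    by_cases hTc : T c = m
    · rw [hTc, Finset.range_eq_Ico,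
        Finset.Ico_union_Ico_eq_Ico (Nat.zero_le m) (Nat.le_add_right m _), Nat.card_Ico]
      omega
    · have hw0c := hw0 c (lt_of_le_of_ne (hTm c) hTc)
      rw [hw0c, Nat.add_zero, Finset.Ico_self, Finset.union_empty, Finset.card_range]
      omega
  -- mucol agrees with P away from 0
  have hmuP : ∀ s : ℕ, s ≠ 0 → mucol s = P s := by
    intro s hs
    rw [hmucol, if_neg hs, hP]
    simp only [if_neg hs]
  have hP0 : P 0 = m := by simp [hP]
  -- the fibers of mu over the set of rows with lam > mu are intervals
  have hfiber : ∀ c : ℕ,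
      ((Finset.univ.filter fun i : Fin m => mu i + 1 ≤ lam i).filter
        fun i => mu i = c).image Fin.val
      = Finset.Ico (P (c + 1)) (min (P c) (T c)) := by
    intro c
    ext k
    rw [Finset.mem_image, Finset.mem_Ico]
    constructor
    · rintro ⟨i, hi, rfl⟩
      rw [Finset.mem_filter, Finset.mem_filter] at hi
      obtain ⟨⟨_, hilam⟩, hic⟩ := hi
      have h1 : (i : ℕ) < P c := (hPchar c i).mp (le_of_eq hic.symm)
      have h2 : ¬ ((i : ℕ) < P (c + 1)) := by
        intro h
        have := (hPchar (c + 1) i).mpr h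
        omega
      have h3 : (i : ℕ) < T c := (hTchar c i).mp (by omega)
      omega
    · rintro ⟨hk1, hk2⟩
      have hkT : k < T c := lt_of_lt_of_le hk2 (min_le_right _ _)
      have hkm : k < m := lt_of_lt_of_le hkT (hTm c)
      refine ⟨⟨k, hkm⟩, ?_, rfl⟩
      rw [Finset.mem_filter, Finset.mem_filter]
      have hc1 : c ≤ mu ⟨k, hkm⟩ := (hPchar c ⟨k, hkm⟩).mpr (by simp only [Fin.val_mk]; omega)
      have hc2 : ¬ (c + 1 ≤ mu ⟨k, hkm⟩) := by
        intro h
        have := (hPchar (c + 1) ⟨k, hkm⟩).mp h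
        simp only [Fin.val_mk] at this
        omega
      have hl : c + 1 ≤ lam ⟨k, hkm⟩ :=
        (hTchar c ⟨k, hkm⟩).mpr (by simp only [Fin.val_mk]; omega)
      exact ⟨⟨Finset.mem_univ _, by omega⟩, by omega⟩
  -- per fiber, the product telescopes
  have hfiberprod : ∀ c ∈ Finset.range (r + 1),
      (∏ i ∈ (Finset.univ.filter fun i : Fin m => mu i + 1 ≤ lam i).filter
          (fun i => mu i = c),
        (eF (((i : ℕ) : ℤ) + 1 - (mu i : ℤ)) / eF (((i : ℕ) : ℤ) - (mu i : ℤ))))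
      = eF (((min (P c) (T c) : ℕ) : ℤ) - (c : ℤ)) / eF ((P (c + 1) : ℤ) - (c : ℤ)) := by
    intro c _
    have hcongr : (∏ i ∈ (Finset.univ.filter fun i : Fin m => mu i + 1 ≤ lam i).filter
          (fun i => mu i = c),
        (eF (((i : ℕ) : ℤ) + 1 - (mu i : ℤ)) / eF (((i : ℕ) : ℤ) - (mu i : ℤ))))
        = ∏ i ∈ (Finset.univ.filter fun i : Fin m => mu i + 1 ≤ lam i).filter
            (fun i => mu i = c),
          (fun k : ℕ => eF ((k : ℤ) + 1 - (c : ℤ)) / eF ((k : ℤ) - (c : ℤ))) (i : ℕ) := by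
      apply Finset.prod_congr rfl
      intro i hi
      rw [Finset.mem_filter] at hi
      simp only [hi.2]
    have himg : (∏ k ∈ Finset.Ico (P (c + 1)) (min (P c) (T c)),
          (fun k : ℕ => eF ((k : ℤ) + 1 - (c : ℤ)) / eF ((k : ℤ) - (c : ℤ))) k)
        = ∏ i ∈ (Finset.univ.filter fun i : Fin m => mu i + 1 ≤ lam i).filter
            (fun i => mu i = c),
          (fun k : ℕ => eF ((k : ℤ) + 1 - (c : ℤ)) / eF ((k : ℤ) - (c : ℤ))) (i : ℕ) := by
      rw [← hfiber c]
      exact Finset.prod_image fun x _ y _ h => Fin.val_injective h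
    have htel : (∏ k ∈ Finset.Ico (P (c + 1)) (min (P c) (T c)),
          (eF (((k + 1 : ℕ) : ℤ) - (c : ℤ)) / eF ((k : ℤ) - (c : ℤ))))
        = eF (((min (P c) (T c) : ℕ) : ℤ) - (c : ℤ)) / eF ((P (c + 1) : ℤ) - (c : ℤ)) :=
      prodRatio (fun k : ℕ => eF ((k : ℤ) - (c : ℤ))) (fun k => eF_ne _)
        (P (c + 1)) (min (P c) (T c)) (le_min (hPmono c) (hPT c))
    rw [hcongr, ← himg, ← htel]
    apply Finset.prod_congr rfl
    intro k _
    rw [show (((k + 1 : ℕ) : ℤ) - (c : ℤ)) = ((k : ℤ) + 1 - (c : ℤ)) by push_cast; ring]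
  -- the full product over rows
  have hmain : (∏ i ∈ Finset.univ.filter (fun i : Fin m => mu i + 1 ≤ lam i),
        (eF (((i : ℕ) : ℤ) + 1 - (mu i : ℤ)) / eF (((i : ℕ) : ℤ) - (mu i : ℤ))))
      = ∏ c ∈ Finset.range (r + 1),
          (eF (((min (P c) (T c) : ℕ) : ℤ) - (c : ℤ)) / eF ((P (c + 1) : ℤ) - (c : ℤ))) := by
    rw [← Finset.prod_fiberwise_of_maps_to (g := mu) (t := Finset.range (r + 1))
      (fun i _ => Finset.mem_range.mpr (by
        have := hmu ⟨0, hm⟩ i (by simp [Fin.le_def])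
        omega))]
    exact Finset.prod_congr rfl hfiberprod
  -- rewriting the statement's terms
  have hterm : ∀ i : Fin m,
      ((RatFunc.X : RatFunc ℚ) - (mu i : RatFunc ℚ) + ((i : ℕ) + 1 : RatFunc ℚ))
        / ((RatFunc.X : RatFunc ℚ) - (mu i : RatFunc ℚ) + ((i : ℕ) : RatFunc ℚ))
      = eF (((i : ℕ) : ℤ) + 1 - (mu i : ℤ)) / eF (((i : ℕ) : ℤ) - (mu i : ℤ)) := by
    intro i
    rw [eF, eF]
    push_cast
    ring
  have hpre : ((RatFunc.X : RatFunc ℚ) + (ν0 : RatFunc ℚ) + (m : RatFunc ℚ))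
        / ((RatFunc.X : RatFunc ℚ) + (m : RatFunc ℚ))
      = eF ((ν0 : ℤ) + (m : ℤ)) / eF ((m : ℤ)) := by
    rw [eF, eF]
    push_cast
    ring
  have hnum : (∏ s ∈ Finset.Icc 1 (r + 1),
        ((RatFunc.X : RatFunc ℚ) + (((nu1 s : ℤ) - s + 1 : ℤ) : RatFunc ℚ)))
      = ∏ c ∈ Finset.range (r + 1), eF ((nu1 (c + 1) : ℤ) - (c : ℤ)) := by
    rw [← Finset.Ico_add_one_right_eq_Icc, Finset.prod_Ico_eq_prod_range,
      show r + 1 + 1 - 1 = r + 1 from rfl]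
    apply Finset.prod_congr rfl
    intro c _
    rw [eF, Nat.add_comm 1 c]
    push_cast
    ring
  have hden : (∏ s ∈ Finset.Icc 1 r,
        ((RatFunc.X : RatFunc ℚ) + (((mucol s : ℤ) - s + 1 : ℤ) : RatFunc ℚ)))
        * ((RatFunc.X : RatFunc ℚ) - (r : RatFunc ℚ))
      = ∏ c ∈ Finset.range (r + 1), eF ((P (c + 1) : ℤ) - (c : ℤ)) := by
    rw [Finset.prod_range_succ]
    congr 1
    · rw [← Finset.Ico_add_one_right_eq_Icc, Finset.prod_Ico_eq_prod_range,
        show r + 1 - 1 = r from rfl]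
      apply Finset.prod_congr rfl
      intro c _
      rw [eF, hmuP (1 + c) (by omega), Nat.add_comm 1 c]
      push_cast
      ring
    · rw [eF, hPr]
      push_cast
      ring
  -- the key head/tail identity
  have hnu11 : nu1 1 = T 0 + ν0 := by
    rw [hnu1, show (1 : ℕ) - 1 = 0 from rfl]
    rw [hmucol 0, if_pos rfl, hmuP 1 one_ne_zero, hlamT 0, hwnu0]
    rw [inf_idem]
    exact sup_eq_right.mpr (le_trans (hPT 0) (Nat.le_add_right _ _))
  have hkey : eF ((ν0 : ℤ) + (m : ℤ))
        * ∏ c ∈ Finset.range (r + 1), eF (((min (P c) (T c) : ℕ) : ℤ) - (c : ℤ))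
      = eF ((m : ℤ))
        * ∏ c ∈ Finset.range (r + 1), eF ((nu1 (c + 1) : ℤ) - (c : ℤ)) := by
    rw [Finset.prod_range_succ', Finset.prod_range_succ']
    have htail : (∏ c ∈ Finset.range r,
          eF (((min (P (c + 1)) (T (c + 1)) : ℕ) : ℤ) - ((c + 1 : ℕ) : ℤ)))
        = ∏ c ∈ Finset.range r, eF ((nu1 (c + 1 + 1) : ℤ) - ((c + 1 : ℕ) : ℤ)) := by
      apply Finset.prod_congr rfl
      intro c _
      have hval : nu1 (c + 2) = min (P (c + 1)) (T (c + 1)) := by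
        rw [hnu1, show (c + 2 : ℕ) - 1 = c + 1 from rfl]
        rw [hmuP (c + 2) (by omega), hmuP (c + 1) (by omega), hlamT (c + 1)]
        by_cases h : T (c + 1) < m
        · rw [hw0 (c + 1) h, Nat.add_zero]
          exact sup_eq_right.mpr (le_inf (hPmono (c + 1)) (hPT (c + 1)))
        · have hTe : T (c + 1) = m := le_antisymm (hTm _) (not_lt.mp h)
          have hle1 : P (c + 1) ≤ T (c + 1) + w (c + 1) :=
            le_trans (hPm _) (hTe ▸ Nat.le_add_right _ _)
          have hle2 : P (c + 1) ≤ T (c + 1) := hTe ▸ hPm _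
          rw [inf_eq_left.mpr hle1, sup_eq_right.mpr (hPmono (c + 1)),
            inf_eq_left.mpr hle2]
      rw [show c + 1 + 1 = c + 2 from rfl, hval]
    rw [htail]
    have hhead : eF ((ν0 : ℤ) + (m : ℤ)) * eF (((min (P 0) (T 0) : ℕ) : ℤ) - ((0 : ℕ) : ℤ))
        = eF ((m : ℤ)) * eF ((nu1 (0 + 1) : ℤ) - ((0 : ℕ) : ℤ)) := by
      have hmin : min (P 0) (T 0) = T 0 := by
        rw [hP0]
        exact min_eq_right (hTm 0)
      rw [hmin, show (0 : ℕ) + 1 = 1 from rfl, hnu11]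
      by_cases hT0 : T 0 = m
      · rw [hT0, eF, eF, eF, eF]
        push_cast
        ring
      · have h0 : ν0 = 0 := by
          rw [← hwnu0]
          exact hw0 0 (lt_of_le_of_ne (hTm 0) hT0)
        rw [h0, eF, eF, eF, eF]
        push_cast
        ring
    calc eF ((ν0 : ℤ) + (m : ℤ))
          * ((∏ c ∈ Finset.range r,
              eF ((nu1 (c + 1 + 1) : ℤ) - ((c + 1 : ℕ) : ℤ)))
            * eF (((min (P 0) (T 0) : ℕ) : ℤ) - ((0 : ℕ) : ℤ)))
        = (∏ c ∈ Finset.range r, eF ((nu1 (c + 1 + 1) : ℤ) - ((c + 1 : ℕ) : ℤ)))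
            * (eF ((ν0 : ℤ) + (m : ℤ)) * eF (((min (P 0) (T 0) : ℕ) : ℤ) - ((0 : ℕ) : ℤ))) := by
          ring
      _ = (∏ c ∈ Finset.range r, eF ((nu1 (c + 1 + 1) : ℤ) - ((c + 1 : ℕ) : ℤ)))
            * (eF ((m : ℤ)) * eF ((nu1 (0 + 1) : ℤ) - ((0 : ℕ) : ℤ))) := by
          rw [hhead]
      _ = eF ((m : ℤ))
            * ((∏ c ∈ Finset.range r, eF ((nu1 (c + 1 + 1) : ℤ) - ((c + 1 : ℕ) : ℤ)))
              * eF ((nu1 (0 + 1) : ℤ) - ((0 : ℕ) : ℤ))) := by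
          ring
  -- final assembly
  have hDne : (∏ c ∈ Finset.range (r + 1), eF ((P (c + 1) : ℤ) - (c : ℤ))) ≠ 0 :=
    Finset.prod_ne_zero_iff.mpr fun c _ => eF_ne _
  have hBne : eF ((m : ℤ)) * (∏ c ∈ Finset.range (r + 1), eF ((P (c + 1) : ℤ) - (c : ℤ))) ≠ 0 :=
    mul_ne_zero (eF_ne _) hDne
  rw [hpre, Finset.prod_congr rfl (fun i _ => hterm i), hmain, hnum, hden,
    Finset.prod_div_distrib, div_mul_div_comm, div_eq_div_iff hBne hDne, hkey]
  ring
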